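/- No sequent of the form {A_i → B_i : i ∈ I} ⇒ (with empty succedent), where I is a finite index set, is provable in iK_d. -/

import Mathlib

inductive Formula where
  | atom : ℕ → Formula
  | top : Formula
  | bot : Formula
  | and : Formula → Formula → Formula
  | or : Formula → Formula → Formula
  | himp : Formula → Formula → Formula
  | imp : Formula → Formula → Formula
  | nabla : Formula → Formula

/-- `nIter n A` is `∇ⁿ A`. -/
def nIter (n : ℕ) (A : Formula) : Formula := Formula.nabla^[n] A

/-- The G3-style cut-free sequent calculus `iK_d`, indexed by an upper bound on
the height of the proof-tree. -/
inductive iKd : ℕ → Multiset Formula → Option Formula → Prop where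
  | idp (h : ℕ) (p : ℕ) : iKd h {Formula.atom p} (some (Formula.atom p))
  | lbot (h : ℕ) : iKd h {Formula.bot} none
  | rtop (h : ℕ) : iKd h 0 (some Formula.top)
  | lw {h : ℕ} {Γ : Multiset Formula} {Δ : Option Formula} (Sig : Multiset Formula) :
      iKd h Γ Δ → iKd (h + 1) (Γ + Sig) Δ
  | rw {h : ℕ} {Γ : Multiset Formula} (A : Formula) :
      iKd h Γ none → iKd (h + 1) Γ (some A)
  | landn {h : ℕ} {Γ : Multiset Formula} {Δ : Option Formula} (n : ℕ) (A B : Formula) :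
      iKd h (nIter n A ::ₘ nIter n B ::ₘ Γ) Δ →
      iKd (h + 1) (nIter n (Formula.and A B) ::ₘ Γ) Δ
  | rand {h : ℕ} {Γ : Multiset Formula} {A B : Formula} :
      iKd h Γ (some A) → iKd h Γ (some B) → iKd (h + 1) Γ (some (Formula.and A B))
  | lorn {h : ℕ} {Γ : Multiset Formula} {Δ : Option Formula} (n : ℕ) (A B : Formula) :
      iKd h (nIter n A ::ₘ Γ) Δ → iKd h (nIter n B ::ₘ Γ) Δ →
      iKd (h + 1) (nIter n (Formula.or A B) ::ₘ Γ) Δ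
  | ror1 {h : ℕ} {Γ : Multiset Formula} {A : Formula} (B : Formula) :
      iKd h Γ (some A) → iKd (h + 1) Γ (some (Formula.or A B))
  | ror2 {h : ℕ} {Γ : Multiset Formula} {B : Formula} (A : Formula) :
      iKd h Γ (some B) → iKd (h + 1) Γ (some (Formula.or A B))
  | limpn {h : ℕ} {Γ : Multiset Formula} {Δ : Option Formula} (n : ℕ) (A B : Formula) :
      iKd h (nIter (n + 1) (Formula.imp A B) ::ₘ Γ) (some (nIter n A)) →
      iKd h (nIter n B ::ₘ nIter (n + 1) (Formula.imp A B) ::ₘ Γ) Δ →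
      iKd (h + 1) (nIter (n + 1) (Formula.imp A B) ::ₘ Γ) Δ
  | rimp {h : ℕ} {Γ : Multiset Formula} {A B : Formula} :
      iKd h (A ::ₘ Γ.map Formula.nabla) (some B) →
      iKd (h + 1) Γ (some (Formula.imp A B))
  | lhimpn {h : ℕ} {Γ : Multiset Formula} {Δ : Option Formula} (n : ℕ) (A B : Formula) :
      iKd h (nIter n (Formula.himp A B) ::ₘ Γ) (some (nIter n A)) →
      iKd h (nIter n B ::ₘ Γ) Δ →
      iKd (h + 1) (nIter n (Formula.himp A B) ::ₘ Γ) Δ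
  | rhimp {h : ℕ} {Γ : Multiset Formula} {A B : Formula} :
      iKd h (A ::ₘ Γ) (some B) → iKd (h + 1) Γ (some (Formula.himp A B))
  | nrule {h : ℕ} {Γ : Multiset Formula} {Δ : Option Formula} :
      iKd h Γ Δ → iKd (h + 1) (Γ.map Formula.nabla) (Δ.map Formula.nabla)

/-- Provability in `iK_d`: provable with some height. -/
def iKdProvable (Γ : Multiset Formula) (Δ : Option Formula) : Prop := ∃ h, iKd h Γ Δ

lemma nIter_succ (n : ℕ) (A : Formula) :
    nIter (n + 1) A = Formula.nabla (nIter n A) := by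
  simp [nIter, Function.iterate_succ_apply']

lemma nIter_ne_imp {n : ℕ} {X C D : Formula}
    (hX : ∀ C D, X ≠ Formula.imp C D) : nIter n X ≠ Formula.imp C D := by
  rcases n with _ | n
  · simpa [nIter] using hX C D
  · rw [nIter_succ]; exact fun h => Formula.noConfusion h

lemma key' : ∀ h Γ Δ, (∀ F ∈ Γ, ∃ A B, F = Formula.imp A B) →
    iKd h Γ Δ → Δ = none → False := by
  intro h
  induction h using Nat.strong_induction_on with
  | _ h IH =>
    intro Γ Δ hall hd hΔ
    cases hd with
    | idp => exact Option.some_ne_none _ hΔ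
    | rtop => exact Option.some_ne_none _ hΔ
    | rw _ _ => exact Option.some_ne_none _ hΔ
    | rand _ _ => exact Option.some_ne_none _ hΔ
    | ror1 _ _ => exact Option.some_ne_none _ hΔ
    | ror2 _ _ => exact Option.some_ne_none _ hΔ
    | rimp _ => exact Option.some_ne_none _ hΔ
    | rhimp _ => exact Option.some_ne_none _ hΔ
    | lbot =>
      obtain ⟨A, B, hAB⟩ := hall Formula.bot (by simp)
      exact Formula.noConfusion hAB
    | lw Sig prem =>
      exact IH _ (Nat.lt_succ_self _) _ _
        (fun F hF => hall F (Multiset.mem_add.2 (Or.inl hF))) prem hΔ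
    | landn n A B prem =>
      obtain ⟨C, D, hCD⟩ := hall _ (Multiset.mem_cons_self _ _)
      exact nIter_ne_imp (fun _ _ h => Formula.noConfusion h) hCD
    | lorn n A B prem1 prem2 =>
      obtain ⟨C, D, hCD⟩ := hall _ (Multiset.mem_cons_self _ _)
      exact nIter_ne_imp (fun _ _ h => Formula.noConfusion h) hCD
    | limpn n A B prem1 prem2 =>
      obtain ⟨C, D, hCD⟩ := hall _ (Multiset.mem_cons_self _ _)
      rw [nIter_succ] at hCD
      exact Formula.noConfusion hCD
    | lhimpn n A B prem1 prem2 =>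
      obtain ⟨C, D, hCD⟩ := hall _ (Multiset.mem_cons_self _ _)
      exact nIter_ne_imp (fun _ _ h => Formula.noConfusion h) hCD
    | @nrule h' Γ0 Δ0 prem =>
      by_cases hΓ : Γ0 = 0
      · subst hΓ
        have hΔ0 : Δ0 = none := by
          cases Δ0
          · rfl
          · exact absurd hΔ (Option.some_ne_none _)
        exact IH _ (Nat.lt_succ_self _) 0 _ (by simp) prem hΔ0
      · obtain ⟨x, hx⟩ := Multiset.exists_mem_of_ne_zero hΓ
        obtain ⟨A, B, hAB⟩ := hall (Formula.nabla x)
          (Multiset.mem_map.2 ⟨x, hx, rfl⟩)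
        exact Formula.noConfusion hAB

lemma key : ∀ h Γ, (∀ F ∈ Γ, ∃ A B, F = Formula.imp A B) → ¬ iKd h Γ none :=
  fun h Γ hall hd => key' h Γ none hall hd rfl

theorem iKd_no_empty_succedent_from_imps (Γ : Multiset (Formula × Formula)) :
    ¬ iKdProvable (Γ.map (fun p => Formula.imp p.1 p.2)) none := by
  rintro ⟨h, hd⟩
  refine key h _ ?_ hd
  intro F hF
  obtain ⟨p, _, rfl⟩ := Multiset.mem_map.1 hF
  exact ⟨p.1, p.2, rfl⟩
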